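/- Let G be a simple even plane triangulation and C a separating induced 3-cycle in G, with the two components of G − V(C) denoted C+ and C−. Set G1 = G − C+ and G2 = G − C−. Suppose {X1, Y1} is a partition of V(G1) and {X2, Y2} is a partition of V(G2) such that G1[X1], G1[Y1], G2[X2], G2[Y2] are all trees and X1 ∩ V(C) = X2 ∩ V(C). Then {X1 ∪ X2, Y1 ∪ Y2} is a partition of V(G) into two sets each inducing a tree in G. -/

import Mathlib

open SimpleGraph

/-- A combinatorial plane triangulation: a connected simple graph together with a
collection of triangular faces, each edge lying on exactly two faces, satisfying
Euler's formula `|V| - |E| + |F| = 2`. -/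
structure IsPlaneTriangulation {V : Type*} [Fintype V] [DecidableEq V]
    (G : SimpleGraph V) [DecidableRel G.Adj] (faces : Finset (Finset V)) : Prop where
  connected : G.Connected
  card_ge : 4 ≤ Fintype.card V
  face_card : ∀ f ∈ faces, f.card = 3
  face_clique : ∀ f ∈ faces, ∀ u ∈ f, ∀ v ∈ f, u ≠ v → G.Adj u v
  edge_two_faces : ∀ u v : V, G.Adj u v → (faces.filter (fun f => u ∈ f ∧ v ∈ f)).card = 2
  euler : (Fintype.card V : ℤ) - G.edgeFinset.card + faces.card = 2


namespace GlueAux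

variable {V : Type*} {G : SimpleGraph V} {A B : Set V}

lemma exists_induce_walk (s : Set V) :
    ∀ {u v : V} (p : G.Walk u v), (∀ x ∈ p.support, x ∈ s) → ∀ (hu : u ∈ s) (hv : v ∈ s),
      ∃ q : (G.induce s).Walk ⟨u, hu⟩ ⟨v, hv⟩,
        q.map (SimpleGraph.Embedding.induce s).toHom = p := by
  intro u v p
  induction p with
  | nil => intro _ hu hv; exact ⟨.nil, rfl⟩
  | @cons u w v h p ih =>
    intro hs hu hv
    have hw : w ∈ s := hs w (by simp)
    obtain ⟨q, hq⟩ := ih (fun x hx => hs x (by simp [hx])) hw hv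
    exact ⟨.cons (by exact h) q, by subst hq; rfl⟩

lemma no_cycle_in_set (s : Set V) (hs : (G.induce s).IsAcyclic) {v : V}
    (d : G.Walk v v) (hd : d.IsCycle) (hsup : ∀ x ∈ d.support, x ∈ s) : False := by
  have hv : v ∈ s := hsup v d.start_mem_support
  obtain ⟨q, hq⟩ := exists_induce_walk s d hsup hv hv
  have hq' : q.IsCycle :=
    (Walk.map_isCycle_iff_of_injective
      (SimpleGraph.Embedding.induce (G := G) s).injective).mp (by rw [hq]; exact hd)
  exact hs q hq'

lemma no_triangle (s : Set V) (hs : (G.induce s).IsAcyclic) {x y z : V}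
    (hx : x ∈ s) (hy : y ∈ s) (hz : z ∈ s)
    (hxy : G.Adj x y) (hyz : G.Adj y z) (hxz : G.Adj x z) : False := by
  have hxy' : (G.induce s).Adj ⟨x, hx⟩ ⟨y, hy⟩ := by exact hxy
  have hyz' : (G.induce s).Adj ⟨y, hy⟩ ⟨z, hz⟩ := by exact hyz
  have hzx' : (G.induce s).Adj ⟨z, hz⟩ ⟨x, hx⟩ := by exact hxz.symm
  apply hs (Walk.cons hxy' (Walk.cons hyz' (Walk.cons hzx' Walk.nil)))
  rw [Walk.cons_isCycle_iff]
  constructor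
  · simp [Walk.isPath_def, Subtype.mk.injEq, hyz.ne, hxy.ne', hxz.ne']
  · intro hmem
    simp only [Walk.edges_cons, Walk.edges_nil, List.mem_cons, List.not_mem_nil, or_false,
      Sym2.eq_iff, Subtype.mk.injEq] at hmem
    simp [hxy.ne, hxz.ne, hyz.ne] at hmem

lemma exists_mid (hcross : ∀ u v, u ∈ A → u ∉ B → v ∈ B → v ∉ A → ¬ G.Adj u v) :
    ∀ {u v : V} (q : G.Walk u v), (∀ x ∈ q.support, x ∈ A ∪ B) → u ∈ A → v ∉ A →
      ∃ z ∈ q.support, z ∈ A ∩ B := by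
  intro u v q
  induction q with
  | nil => intro _ hu hv; exact absurd hu hv
  | @cons u w v h q ih =>
    intro hsup hu hv
    by_cases hB : u ∈ B
    · exact ⟨u, by simp, hu, hB⟩
    · have hw : w ∈ A := by
        rcases hsup w (by simp) with hwA | hwB
        · exact hwA
        · by_cases hwA : w ∈ A
          · exact hwA
          · exact absurd h (hcross u w hu hB hwB hwA)
      obtain ⟨z, hz, hzS⟩ := ih (fun x hx => hsup x (by simp [hx])) hw hv
      exact ⟨z, by simp [hz], hzS⟩

lemma walk_side (hcross : ∀ u v, u ∈ A → u ∉ B → v ∈ B → v ∉ A → ¬ G.Adj u v) :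
    ∀ {u v : V} (q : G.Walk u v), q.IsPath → (∀ x ∈ q.support, x ∈ A ∪ B) →
      (∀ x ∈ q.support, x ∈ A ∩ B → x = u ∨ x = v) →
      (∀ x ∈ q.support, x ∈ A) ∨ (∀ x ∈ q.support, x ∈ B) := by
  intro u v q
  induction q with
  | nil =>
    intro _ hsup _
    rcases hsup _ (Walk.start_mem_support _) with h | h
    · left; intro x hx; rw [Walk.support_nil, List.mem_singleton] at hx; subst hx; exact h
    · right; intro x hx; rw [Walk.support_nil, List.mem_singleton] at hx; subst hx; exact h
  | @cons u w v h q ih =>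
    intro hq hsup hS
    have hq' := (Walk.cons_isPath_iff _ _).mp hq
    have hS' : ∀ x ∈ q.support, x ∈ A ∩ B → x = w ∨ x = v := by
      intro x hx hxS
      rcases hS x (by simp [hx]) hxS with rfl | rfl
      · exact absurd hx hq'.2
      · right; rfl
    have hwAB : w ∈ A ∪ B := hsup w (by simp [q.start_mem_support])
    rcases ih hq'.1 (fun x hx => hsup x (by simp [hx])) hS' with hA' | hB'
    · by_cases huA : u ∈ A
      · left; intro x hx
        rcases List.mem_cons.mp (by simpa using hx) with rfl | hx'
        · exact huA
        · exact hA' x hx'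
      · have huB : u ∈ B := (hsup u (by simp)).resolve_left huA
        have hwA : w ∈ A := hA' w q.start_mem_support
        by_cases hwB : w ∈ B
        · rcases hS w (by simp [q.start_mem_support]) ⟨hwA, hwB⟩ with hw1 | hw2
          · exact absurd hw1 h.ne'
          · subst hw2
            have hqnil : q = Walk.nil := Walk.isPath_iff_eq_nil.mp hq'.1
            subst hqnil
            right; intro x hx
            rw [Walk.support_cons, List.mem_cons, Walk.support_nil, List.mem_singleton] at hx
            rcases hx with rfl | rfl
            · exact huB
            · exact hwB
        · exact absurd h.symm (hcross w u hwA hwB huB huA)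
    · by_cases huB : u ∈ B
      · right; intro x hx
        rcases List.mem_cons.mp (by simpa using hx) with rfl | hx'
        · exact huB
        · exact hB' x hx'
      · have huA : u ∈ A := (hsup u (by simp)).resolve_right huB
        have hwB : w ∈ B := hB' w q.start_mem_support
        by_cases hwA : w ∈ A
        · rcases hS w (by simp [q.start_mem_support]) ⟨hwA, hwB⟩ with hw1 | hw2
          · exact absurd hw1 h.ne'
          · subst hw2
            have hqnil : q = Walk.nil := Walk.isPath_iff_eq_nil.mp hq'.1
            subst hqnil
            left; intro x hx
            rw [Walk.support_cons, List.mem_cons, Walk.support_nil, List.mem_singleton] at hx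
            rcases hx with rfl | rfl
            · exact huA
            · exact hwA
        · exact absurd h (hcross u w huA huB hwB hwA)

lemma mem_support_tail_of_closed {u x : V} (c : G.Walk u u) (hc : ¬c.Nil)
    (hx : x ∈ c.support) : x ∈ c.support.tail := by
  cases c with
  | nil => exact absurd Walk.Nil.nil hc
  | @cons _ w _ h q =>
    rw [Walk.support_cons] at hx ⊢
    simp only [List.tail_cons]
    rcases List.mem_cons.mp hx with rfl | hx'
    · exact q.end_mem_support
    · exact hx'

lemma mem_support_rotate_iff [DecidableEq V] {u w : V} (c : G.Walk u u) (hc : ¬c.Nil)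
    (h : w ∈ c.support) {x : V} :
    x ∈ (c.rotate w h).support ↔ x ∈ c.support := by
  have hrot := Walk.support_rotate c w h
  constructor
  · intro hx
    rcases (Walk.mem_support_iff _).mp hx with rfl | hx'
    · exact h
    · exact List.mem_of_mem_tail (hrot.mem_iff.mp hx')
  · intro hx
    exact List.mem_of_mem_tail (hrot.mem_iff.mpr (mem_support_tail_of_closed c hc hx))

lemma build_cycle (hAcy : (G.induce A).IsAcyclic) {s w z : V}
    (hadj : G.Adj s w) (hzs : G.Adj z s) (hwz : w ≠ z)
    (t1 : G.Walk w z) (ht1 : t1.IsPath) (hside : ∀ x ∈ t1.support, x ∈ A)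
    (hsA : s ∈ A) (hsnot : s ∉ t1.support) : False := by
  have hQpath : (t1.concat hzs).IsPath := by
    rw [Walk.isPath_def, Walk.concat_eq_append, Walk.support_append]
    rw [List.nodup_append]
    refine ⟨ht1.support_nodup, by simp, ?_⟩
    intro x hx y hx' hxy
    simp only [Walk.support_cons, Walk.support_nil, List.tail_cons, List.mem_singleton] at hx'
    subst hx'
    exact hsnot (hxy ▸ hx)
  have hedge : s(s, w) ∉ (t1.concat hzs).edges := by
    rw [Walk.concat_eq_append, Walk.edges_append]
    intro hmem
    rcases List.mem_append.mp hmem with hmem | hmem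
    · exact hsnot (t1.fst_mem_support_of_mem_edges hmem)
    · simp only [Walk.edges_cons, Walk.edges_nil, List.mem_singleton] at hmem
      rw [Sym2.eq_iff] at hmem
      rcases hmem with ⟨h1, h2⟩ | ⟨h1, h2⟩
      · exact hzs.ne' h1
      · exact hwz h2
  have hcyc : (Walk.cons hadj (t1.concat hzs)).IsCycle :=
    (Walk.cons_isCycle_iff _ _).mpr ⟨hQpath, hedge⟩
  apply no_cycle_in_set A hAcy _ hcyc
  intro x hx
  rw [Walk.support_cons, List.mem_cons] at hx
  rcases hx with rfl | hx
  · exact hsA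
  · rw [Walk.concat_eq_append, Walk.support_append, List.mem_append] at hx
    rcases hx with hx | hx
    · exact hside x hx
    · simp only [Walk.support_cons, Walk.support_nil, List.tail_cons, List.mem_singleton] at hx
      subst hx; exact hsA

lemma no_mixed_cycle [DecidableEq V]
    (hA : (G.induce A).IsAcyclic) (hB : (G.induce B).IsAcyclic)
    (hclique : ∀ u ∈ A ∩ B, ∀ v ∈ A ∩ B, u ≠ v → G.Adj u v)
    (hcross : ∀ u v, u ∈ A → u ∉ B → v ∈ B → v ∉ A → ¬ G.Adj u v)
    {v : V} (d : G.Walk v v) (hd : d.IsCycle) (hsup : ∀ x ∈ d.support, x ∈ A ∪ B) : False := by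
  by_cases h1 : ∀ x ∈ d.support, x ∈ A
  · exact no_cycle_in_set A hA d hd h1
  by_cases h2 : ∀ x ∈ d.support, x ∈ B
  · exact no_cycle_in_set B hB d hd h2
  push_neg at h1 h2
  obtain ⟨xB, hxBmem, hxBA⟩ := h1
  obtain ⟨yA, hyAmem, hyAB⟩ := h2
  have hxB_B : xB ∈ B := (hsup xB hxBmem).resolve_left hxBA
  have hyA_A : yA ∈ A := (hsup yA hyAmem).resolve_right hyAB
  have hdnil : ¬ d.Nil := hd.not_nil
  set c1 := d.rotate yA hyAmem with hc1def
  have hc1 : c1.IsCycle := hd.rotate _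
  have hmem1 : ∀ {x : V}, x ∈ c1.support ↔ x ∈ d.support :=
    fun {x} => mem_support_rotate_iff d hdnil hyAmem
  have hsup1 : ∀ x ∈ c1.support, x ∈ A ∪ B := fun x hx => hsup x (hmem1.mp hx)
  have hx1 : xB ∈ c1.support := hmem1.mpr hxBmem
  obtain ⟨s₀, hs₀q, hs₀S⟩ := exists_mid hcross (c1.takeUntil xB hx1)
    (fun x hx => hsup1 x (Walk.support_takeUntil_subset _ _ hx)) hyA_A hxBA
  have hs₀c1 : s₀ ∈ c1.support := Walk.support_takeUntil_subset _ _ hs₀q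
  set c2 := c1.rotate s₀ hs₀c1 with hc2def
  have hc2 : c2.IsCycle := hc1.rotate _
  have hmem2 : ∀ {x : V}, x ∈ c2.support ↔ x ∈ c1.support :=
    fun {x} => mem_support_rotate_iff c1 hc1.not_nil hs₀c1
  have hsup2 : ∀ x ∈ c2.support, x ∈ A ∪ B := fun x hx => hsup1 x (hmem2.mp hx)
  have hx2 : xB ∈ c2.support := hmem2.mpr hx1
  have hy2 : yA ∈ c2.support := hmem2.mpr (hmem1.mpr hyAmem)
  obtain ⟨w, hadj, p, hp_eq⟩ := Walk.not_nil_iff.mp hc2.not_nil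
  rw [hp_eq] at hc2 hsup2 hx2 hy2
  obtain ⟨hppath, hpedge⟩ := (Walk.cons_isCycle_iff _ _).mp hc2
  have hx_p : xB ∈ p.support := by
    rcases List.mem_cons.mp (by simpa using hx2) with rfl | hx'
    · exact absurd hs₀S.1 hxBA
    · exact hx'
  have hy_p : yA ∈ p.support := by
    rcases List.mem_cons.mp (by simpa using hy2) with rfl | hy'
    · exact absurd hs₀S.2 hyAB
    · exact hy'
  have hsupp_p : ∀ x ∈ p.support, x ∈ A ∪ B := fun x hx => hsup2 x (by simp [hx])
  by_cases hzex : ∃ z ∈ p.support, z ∈ A ∩ B ∧ z ≠ w ∧ z ≠ s₀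
  · obtain ⟨z, hzp, hzS, hzw, hzs⟩ := hzex
    have ht1path : (p.takeUntil z hzp).IsPath := hppath.takeUntil _
    have hs₀t2 : s₀ ∈ (p.dropUntil z hzp).support := (p.dropUntil z hzp).end_mem_support
    have hs₀nott1 : s₀ ∉ (p.takeUntil z hzp).support := by
      intro hmem
      have hs₀tail : s₀ ∈ (p.dropUntil z hzp).support.tail := by
        rcases (Walk.mem_support_iff _).mp hs₀t2 with h' | h'
        · exact absurd h'.symm hzs
        · exact h'
      have hnodup := hppath.support_nodup
      rw [← p.take_spec hzp, Walk.support_append, List.nodup_append] at hnodup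
      exact hnodup.2.2 _ hmem _ hs₀tail rfl
    have hS_t1 : ∀ x ∈ (p.takeUntil z hzp).support, x ∈ A ∩ B → x = w ∨ x = z := by
      intro x hx hxS
      by_cases hxz : x = z
      · exact Or.inr hxz
      by_cases hxw : x = w
      · exact Or.inl hxw
      have hxs : x ≠ s₀ := fun h' => hs₀nott1 (h' ▸ hx)
      exact absurd (no_triangle A hA hxS.1 hzS.1 hs₀S.1
        (hclique x hxS z hzS hxz) (hclique z hzS s₀ hs₀S hzs) (hclique x hxS s₀ hs₀S hxs)) not_false
    have hzA : z ∈ A := hzS.1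
    have hzB : z ∈ B := hzS.2
    have hzadj : G.Adj z s₀ := hclique z hzS s₀ hs₀S hzs
    rcases walk_side hcross (p.takeUntil z hzp) ht1path
      (fun x hx => hsupp_p x (Walk.support_takeUntil_subset _ _ hx)) hS_t1 with hsideA | hsideB
    · exact build_cycle hA hadj hzadj (fun h' => hzw h'.symm) (p.takeUntil z hzp)
        ht1path hsideA hs₀S.1 hs₀nott1
    · exact build_cycle hB hadj hzadj (fun h' => hzw h'.symm) (p.takeUntil z hzp)
        ht1path hsideB hs₀S.2 hs₀nott1
  · push_neg at hzex
    have hS_p : ∀ x ∈ p.support, x ∈ A ∩ B → x = w ∨ x = s₀ := by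
      intro x hx hxS
      by_cases hxw : x = w
      · exact Or.inl hxw
      by_cases hxs : x = s₀
      · exact Or.inr hxs
      · exact absurd hxs (by simpa [hxw] using hzex x hx hxS)
    rcases walk_side hcross p hppath hsupp_p hS_p with hall | hall
    · exact hxBA (hall xB hx_p)
    · exact hyAB (hall yA hy_p)

lemma glue_trees [DecidableEq V]
    (hA : (G.induce A).IsTree) (hB : (G.induce B).IsTree)
    (hne : (A ∩ B).Nonempty)
    (hclique : ∀ u ∈ A ∩ B, ∀ v ∈ A ∩ B, u ≠ v → G.Adj u v)
    (hcross : ∀ u v, u ∈ A → u ∉ B → v ∈ B → v ∉ A → ¬ G.Adj u v) :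
    (G.induce (A ∪ B)).IsTree := by
  constructor
  · exact induce_union_connected hA.isConnected.preconnected hB.isConnected.preconnected hne
  · intro x c hc
    have hd : (c.map (SimpleGraph.Embedding.induce (G := G) (A ∪ B)).toHom).IsCycle :=
      hc.map (SimpleGraph.Embedding.induce (G := G) (A ∪ B)).injective
    apply no_mixed_cycle hA.IsAcyclic hB.IsAcyclic hclique hcross _ hd
    intro y hy
    rw [Walk.support_map, List.mem_map] at hy
    obtain ⟨y', _, rfl⟩ := hy
    exact y'.2

end GlueAux

/-- Gluing tree partitions along a separating triangle: if `C` is a separating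
induced 3-cycle of an even plane triangulation `G` with components `C⁺`, `C⁻` of
`G − V(C)`, and the graphs `G₁ = G − C⁺` and `G₂ = G − C⁻` admit tree partitions
`{X1, Y1}` resp. `{X2, Y2}` agreeing on `V(C)`, then `{X1 ∪ X2, Y1 ∪ Y2}` is a
tree partition of `G`. -/
theorem glue_tree_partitions {V : Type*} [Fintype V] [DecidableEq V]
    (G : SimpleGraph V) [DecidableRel G.Adj] (faces : Finset (Finset V))
    (hT : IsPlaneTriangulation G faces) (heven : ∀ v : V, Even (G.degree v))
    (a b c : V) (hab : G.Adj a b) (hbc : G.Adj b c) (hac : G.Adj a c)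
    (Cs : Set V) (hCs : Cs = {a, b, c})
    (Cp Cm : Set V) (hCp : Cp.Nonempty) (hCm : Cm.Nonempty)
    (hdisjC : Disjoint Cp Cm) (hcompl : Cp ∪ Cm = Csᶜ)
    (hCpconn : (G.induce Cp).Connected) (hCmconn : (G.induce Cm).Connected)
    (hsep : ∀ u ∈ Cp, ∀ v ∈ Cm, ¬ G.Adj u v)
    (X1 Y1 : Set V) (hdisj1 : Disjoint X1 Y1) (hunion1 : X1 ∪ Y1 = Cpᶜ)
    (hX1 : (G.induce X1).IsTree) (hY1 : (G.induce Y1).IsTree)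
    (X2 Y2 : Set V) (hdisj2 : Disjoint X2 Y2) (hunion2 : X2 ∪ Y2 = Cmᶜ)
    (hX2 : (G.induce X2).IsTree) (hY2 : (G.induce Y2).IsTree)
    (hagree : X1 ∩ Cs = X2 ∩ Cs) :
    Disjoint (X1 ∪ X2) (Y1 ∪ Y2) ∧ (X1 ∪ X2) ∪ (Y1 ∪ Y2) = Set.univ ∧
      (G.induce (X1 ∪ X2)).IsTree ∧ (G.induce (Y1 ∪ Y2)).IsTree := by
  classical
  subst hCs
  have ha : (a : V) ∈ ({a, b, c} : Set V) := by simp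
  have hb : (b : V) ∈ ({a, b, c} : Set V) := by simp
  have hc : (c : V) ∈ ({a, b, c} : Set V) := by simp
  have hCsCp : ∀ x ∈ ({a, b, c} : Set V), x ∉ Cp := by
    intro x hx hxp
    have hx' : x ∈ ({a, b, c} : Set V)ᶜ := by rw [← hcompl]; exact Or.inl hxp
    exact hx' hx
  have hCsCm : ∀ x ∈ ({a, b, c} : Set V), x ∉ Cm := by
    intro x hx hxm
    have hx' : x ∈ ({a, b, c} : Set V)ᶜ := by rw [← hcompl]; exact Or.inr hxm
    exact hx' hx
  have hmemCs : ∀ x : V, x ∉ Cp → x ∉ Cm → x ∈ ({a, b, c} : Set V) := by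
    intro x hxp hxm
    by_contra hxc
    have : x ∈ Cp ∪ Cm := by rw [hcompl]; exact hxc
    rcases this with h | h
    exacts [hxp h, hxm h]
  have hsplit1 : ∀ x : V, x ∉ Cp → x ∈ X1 ∪ Y1 := by
    intro x hx; rw [hunion1]; exact hx
  have hsplit2 : ∀ x : V, x ∉ Cm → x ∈ X2 ∪ Y2 := by
    intro x hx; rw [hunion2]; exact hx
  have hX1p : ∀ x ∈ X1, x ∉ Cp := by
    intro x hx
    have hx' : x ∈ Cpᶜ := by rw [← hunion1]; exact Or.inl hx
    exact hx'
  have hY1p : ∀ x ∈ Y1, x ∉ Cp := by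
    intro x hx
    have hx' : x ∈ Cpᶜ := by rw [← hunion1]; exact Or.inr hx
    exact hx'
  have hX2m : ∀ x ∈ X2, x ∉ Cm := by
    intro x hx
    have hx' : x ∈ Cmᶜ := by rw [← hunion2]; exact Or.inl hx
    exact hx'
  have hY2m : ∀ x ∈ Y2, x ∉ Cm := by
    intro x hx
    have hx' : x ∈ Cmᶜ := by rw [← hunion2]; exact Or.inr hx
    exact hx'
  have hCsAdj : ∀ u ∈ ({a, b, c} : Set V), ∀ v ∈ ({a, b, c} : Set V), u ≠ v → G.Adj u v := by
    intro u hu v hv huv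
    simp only [Set.mem_insert_iff, Set.mem_singleton_iff] at hu hv
    rcases hu with rfl | rfl | rfl <;> rcases hv with rfl | rfl | rfl <;>
      first
        | exact absurd rfl huv
        | exact hab
        | exact hab.symm
        | exact hbc
        | exact hbc.symm
        | exact hac
        | exact hac.symm
  have hagreeY : Y1 ∩ {a, b, c} = Y2 ∩ {a, b, c} := by
    ext x
    constructor
    · rintro ⟨hx1, hxc⟩
      refine ⟨?_, hxc⟩
      rcases hsplit2 x (hCsCm x hxc) with h | h
      · have hxX1 : x ∈ X1 ∩ ({a, b, c} : Set V) := by rw [hagree]; exact ⟨h, hxc⟩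
        exact (Set.disjoint_left.mp hdisj1 hxX1.1 hx1).elim
      · exact h
    · rintro ⟨hx2, hxc⟩
      refine ⟨?_, hxc⟩
      rcases hsplit1 x (hCsCp x hxc) with h | h
      · have hxX2 : x ∈ X2 ∩ ({a, b, c} : Set V) := by rw [← hagree]; exact ⟨h, hxc⟩
        exact (Set.disjoint_left.mp hdisj2 hxX2.1 hx2).elim
      · exact h
  have hX1X2Cs : ∀ x ∈ X1 ∩ X2, x ∈ ({a, b, c} : Set V) := fun x hx =>
    hmemCs x (hX1p x hx.1) (hX2m x hx.2)
  have hY1Y2Cs : ∀ x ∈ Y1 ∩ Y2, x ∈ ({a, b, c} : Set V) := fun x hx =>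
    hmemCs x (hY1p x hx.1) (hY2m x hx.2)
  have hneX : (X1 ∩ X2).Nonempty := by
    have hex : ∃ x, x ∈ X1 ∩ ({a, b, c} : Set V) := by
      by_contra h
      push_neg at h
      have hY : ∀ x ∈ ({a, b, c} : Set V), x ∈ Y1 := by
        intro x hx
        rcases hsplit1 x (hCsCp x hx) with h1 | h1
        · exact absurd ⟨h1, hx⟩ (h x)
        · exact h1
      exact GlueAux.no_triangle Y1 hY1.IsAcyclic (hY a ha) (hY b hb) (hY c hc) hab hbc hac
    obtain ⟨x, hx⟩ := hex
    have hx2 : x ∈ X2 ∩ ({a, b, c} : Set V) := by rw [← hagree]; exact hx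
    exact ⟨x, hx.1, hx2.1⟩
  have hneY : (Y1 ∩ Y2).Nonempty := by
    have hex : ∃ x, x ∈ Y1 ∩ ({a, b, c} : Set V) := by
      by_contra h
      push_neg at h
      have hX : ∀ x ∈ ({a, b, c} : Set V), x ∈ X1 := by
        intro x hx
        rcases hsplit1 x (hCsCp x hx) with h1 | h1
        · exact h1
        · exact absurd ⟨h1, hx⟩ (h x)
      exact GlueAux.no_triangle X1 hX1.IsAcyclic (hX a ha) (hX b hb) (hX c hc) hab hbc hac
    obtain ⟨x, hx⟩ := hex
    have hx2 : x ∈ Y2 ∩ ({a, b, c} : Set V) := by rw [← hagreeY]; exact hx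
    exact ⟨x, hx.1, hx2.1⟩
  have hcrossX : ∀ u v : V, u ∈ X1 → u ∉ X2 → v ∈ X2 → v ∉ X1 → ¬ G.Adj u v := by
    intro u v hu1 hu2 hv2 hv1 hadj
    have huCm : u ∈ Cm := by
      by_cases hcu : u ∈ ({a, b, c} : Set V)
      · have : u ∈ X2 ∩ ({a, b, c} : Set V) := by rw [← hagree]; exact ⟨hu1, hcu⟩
        exact absurd this.1 hu2
      · rcases (show u ∈ Cp ∪ Cm by rw [hcompl]; exact hcu) with h | h
        · exact absurd h (hX1p u hu1)
        · exact h
    have hvCp : v ∈ Cp := by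
      by_cases hcv : v ∈ ({a, b, c} : Set V)
      · have : v ∈ X1 ∩ ({a, b, c} : Set V) := by rw [hagree]; exact ⟨hv2, hcv⟩
        exact absurd this.1 hv1
      · rcases (show v ∈ Cp ∪ Cm by rw [hcompl]; exact hcv) with h | h
        · exact h
        · exact absurd h (hX2m v hv2)
    exact hsep v hvCp u huCm hadj.symm
  have hcrossY : ∀ u v : V, u ∈ Y1 → u ∉ Y2 → v ∈ Y2 → v ∉ Y1 → ¬ G.Adj u v := by
    intro u v hu1 hu2 hv2 hv1 hadj
    have huCm : u ∈ Cm := by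
      by_cases hcu : u ∈ ({a, b, c} : Set V)
      · have : u ∈ Y2 ∩ ({a, b, c} : Set V) := by rw [← hagreeY]; exact ⟨hu1, hcu⟩
        exact absurd this.1 hu2
      · rcases (show u ∈ Cp ∪ Cm by rw [hcompl]; exact hcu) with h | h
        · exact absurd h (hY1p u hu1)
        · exact h
    have hvCp : v ∈ Cp := by
      by_cases hcv : v ∈ ({a, b, c} : Set V)
      · have : v ∈ Y1 ∩ ({a, b, c} : Set V) := by rw [hagreeY]; exact ⟨hv2, hcv⟩
        exact absurd this.1 hv1
      · rcases (show v ∈ Cp ∪ Cm by rw [hcompl]; exact hcv) with h | h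
        · exact h
        · exact absurd h (hY2m v hv2)
    exact hsep v hvCp u huCm hadj.symm
  have treeX : (G.induce (X1 ∪ X2)).IsTree :=
    GlueAux.glue_trees hX1 hX2 hneX
      (fun u hu v hv huv => hCsAdj u (hX1X2Cs u hu) v (hX1X2Cs v hv) huv) hcrossX
  have treeY : (G.induce (Y1 ∪ Y2)).IsTree :=
    GlueAux.glue_trees hY1 hY2 hneY
      (fun u hu v hv huv => hCsAdj u (hY1Y2Cs u hu) v (hY1Y2Cs v hv) huv) hcrossY
  refine ⟨?_, ?_, treeX, treeY⟩
  · rw [Set.disjoint_left]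
    rintro x (hx | hx) (hy | hy)
    · exact Set.disjoint_left.mp hdisj1 hx hy
    · have hcx : x ∈ ({a, b, c} : Set V) := hmemCs x (hX1p x hx) (hY2m x hy)
      have hx2 : x ∈ X2 ∩ ({a, b, c} : Set V) := by rw [← hagree]; exact ⟨hx, hcx⟩
      exact Set.disjoint_left.mp hdisj2 hx2.1 hy
    · have hcx : x ∈ ({a, b, c} : Set V) := hmemCs x (hY1p x hy) (hX2m x hx)
      have hx1 : x ∈ X1 ∩ ({a, b, c} : Set V) := by rw [hagree]; exact ⟨hx, hcx⟩
      exact Set.disjoint_left.mp hdisj1 hx1.1 hy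
    · exact Set.disjoint_left.mp hdisj2 hx hy
  · ext x
    simp only [Set.mem_union, Set.mem_univ, iff_true]
    by_cases hp : x ∈ Cp
    · have hm : x ∉ Cm := fun hm => Set.disjoint_left.mp hdisjC hp hm
      rcases hsplit2 x hm with h | h
      exacts [Or.inl (Or.inr h), Or.inr (Or.inr h)]
    · rcases hsplit1 x hp with h | h
      exacts [Or.inl (Or.inl h), Or.inr (Or.inl h)]
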